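/- Let r ≥ 2, u ≥ 1 and let A = (M^{2^r - 2} + M^{2^r - 3} + ⋯ + M + 1)^{2^u} = (Σ_{i=0}^{2^r - 2} M^i)^{2^u} in F_2[x]. Then the length ℓ_A equals 2^u + 1. -/
import Mathlib


open Polynomial Finset

/-- The polynomial `M = x^2 + x + 1` over `F_2`. -/
noncomputable def M : Polynomial (ZMod 2) := X ^ 2 + X + 1

/-- The odd part of a binary polynomial: `P` divided by `x^{val_x(P)} (x+1)^{val_{x+1}(P)}`. -/
noncomputable def oddPart (P : Polynomial (ZMod 2)) : Polynomial (ZMod 2) :=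
  P / (X ^ P.rootMultiplicity 0 * (X + 1) ^ P.rootMultiplicity 1)

/-- The Collatz sequence of a binary polynomial `A`:
`A_0 = A`, `A_{2k+1} = oddPart A_{2k}`, `A_{2k+2} = 1 + M * A_{2k+1}`. -/
noncomputable def collatz (A : Polynomial (ZMod 2)) : ℕ → Polynomial (ZMod 2)
  | 0 => A
  | n + 1 => if n % 2 = 0 then oddPart (collatz A n) else 1 + M * collatz A n

/-- `a_k`: the multiplicity of `x` in `A_k`. -/
noncomputable def aSeq (A : Polynomial (ZMod 2)) (k : ℕ) : ℕ :=
  (collatz A k).rootMultiplicity 0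

/-- `b_k`: the multiplicity of `x + 1` in `A_k`. -/
noncomputable def bSeq (A : Polynomial (ZMod 2)) (k : ℕ) : ℕ :=
  (collatz A k).rootMultiplicity 1

/-- The length `ℓ_A = m + 1`, where `m` is the least nonnegative integer
with `A_{2m+1} = 1`. -/
noncomputable def collatzLength (A : Polynomial (ZMod 2)) : ℕ :=
  sInf {m : ℕ | collatz A (2 * m + 1) = 1} + 1

section Aux

open Polynomial

lemma oddPart_eq_of_odd (a b : ℕ) (Q : Polynomial (ZMod 2))
    (h0 : Q.eval 0 = 1) (h1 : Q.eval 1 = 1) :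
    oddPart (X ^ a * (X + 1) ^ b * Q) = Q := by
  have hQ0 : Q ≠ 0 := by intro h; rw [h] at h0; simp at h0
  have hx1 : (X + 1 : Polynomial (ZMod 2)) = X - C 1 := by
    rw [map_one, CharTwo.sub_eq_add]
  have hx0 : (X : Polynomial (ZMod 2)) = X - C 0 := by rw [map_zero, sub_zero]
  have hX1ne : (X + 1 : Polynomial (ZMod 2)) ≠ 0 := by
    rw [hx1]; exact X_sub_C_ne_zero 1
  have hmul1 : (X : Polynomial (ZMod 2)) ^ a * (X + 1) ^ b ≠ 0 :=
    mul_ne_zero (pow_ne_zero _ X_ne_zero) (pow_ne_zero _ hX1ne)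
  have hP : (X : Polynomial (ZMod 2)) ^ a * (X + 1) ^ b * Q ≠ 0 :=
    mul_ne_zero hmul1 hQ0
  have hroot0 : rootMultiplicity 0 ((X : Polynomial (ZMod 2)) ^ a * (X + 1) ^ b * Q) = a := by
    rw [rootMultiplicity_mul hP, rootMultiplicity_mul hmul1]
    rw [rootMultiplicity_eq_zero (p := Q) (by simp [IsRoot, h0]),
        rootMultiplicity_eq_zero (p := ((X:Polynomial (ZMod 2)) + 1) ^ b) (by simp [IsRoot]),
        add_zero, add_zero]
    conv_lhs => rw [hx0]
    exact rootMultiplicity_X_sub_C_pow 0 a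
  have hroot1 : rootMultiplicity 1 ((X : Polynomial (ZMod 2)) ^ a * (X + 1) ^ b * Q) = b := by
    rw [rootMultiplicity_mul hP, rootMultiplicity_mul hmul1]
    rw [rootMultiplicity_eq_zero (p := Q) (by simp [IsRoot, h1]),
        rootMultiplicity_eq_zero (p := (X:Polynomial (ZMod 2)) ^ a) (by simp [IsRoot]),
        add_zero, zero_add, hx1]
    exact rootMultiplicity_X_sub_C_pow 1 b
  have hmon : ((X : Polynomial (ZMod 2)) ^ a * (X + 1) ^ b).Monic := by
    have h1' : (X + 1 : Polynomial (ZMod 2)).Monic := by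
      simpa using monic_X_add_C (1 : ZMod 2)
    exact (monic_X_pow a).mul (h1'.pow b)
  rw [oddPart, hroot0, hroot1, ← divByMonic_eq_div _ hmon]
  exact mul_divByMonic_cancel_left Q hmon

lemma collatz_odd_idx (A : Polynomial (ZMod 2)) (k : ℕ) :
    collatz A (2 * k + 1) = oddPart (collatz A (2 * k)) := by
  have h : (2 * k) % 2 = 0 := by omega
  rw [collatz, h]; simp

lemma collatz_even_idx (A : Polynomial (ZMod 2)) (k : ℕ) :
    collatz A (2 * k + 2) = 1 + M * collatz A (2 * k + 1) := by
  have h : (2 * k + 1) % 2 = 1 := by omega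
  rw [show 2 * k + 2 = (2 * k + 1) + 1 from rfl, collatz, h]; simp

end Aux

noncomputable def Gaux (n s k : ℕ) : Polynomial (ZMod 2) :=
  1 + M ^ (n + k) * (M + 1) ^ (n - k) * (∑ i ∈ Finset.range s, M ^ i) ^ (2 * n)

theorem length_geom_sum_pow_two_minus_two (r u : ℕ) (hr : 2 ≤ r) (hu : 1 ≤ u)
    (A : Polynomial (ZMod 2))
    (hA : A = (∑ i ∈ Finset.range (2 ^ r - 2 + 1), M ^ i) ^ 2 ^ u) :
    collatzLength A = 2 ^ u + 1 := by
  have h2le : 2 ≤ 2 ^ (r - 1) := by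
    calc 2 = 2 ^ 1 := (pow_one 2).symm
    _ ≤ 2 ^ (r - 1) := Nat.pow_le_pow_right (by norm_num) (by omega)
  obtain ⟨s, hs⟩ : ∃ s, 2 ^ (r - 1) = s + 1 := ⟨2 ^ (r - 1) - 1, by omega⟩
  have hs1 : 1 ≤ s := by omega
  have hrr : 2 ^ r = 2 ^ (r - 1) * 2 := by
    rw [← pow_succ]; congr 1; omega
  have ht : 2 ^ r - 2 + 1 = 2 * s + 1 := by omega
  set n := 2 ^ u with hn
  have hn2 : 2 ≤ n := by
    rw [hn]
    calc 2 = 2 ^ 1 := (pow_one 2).symm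
    _ ≤ 2 ^ u := Nat.pow_le_pow_right (by norm_num) hu
  rw [ht] at hA
  have hz : (1 : ZMod 2) + 1 = 0 := by decide
  have h2 : (1 : Polynomial (ZMod 2)) + 1 = 0 := CharTwo.add_self_eq_zero 1
  have hM1 : M + 1 = X * (X + 1) := by
    have e : M + 1 = X * (X + 1) + (1 + 1) := by rw [M]; ring
    rw [e, h2, add_zero]
  have hMe0 : M.eval 0 = 1 := by simp [M]
  have hMe1 : M.eval 1 = 1 := by simp [M, hz]
  have hM1e0 : (M + 1).eval 0 = 0 := by rw [hM1]; simp
  have hM1e1 : (M + 1).eval 1 = 0 := by rw [hM1]; simp [hz]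
  have hMne : M ≠ 0 := by intro h; rw [h] at hMe0; simp at hMe0
  have hX1ne : (X + 1 : Polynomial (ZMod 2)) ≠ 0 := by
    intro h
    have := congrArg (Polynomial.eval 0) h
    simp at this
  have hM1ne : M + 1 ≠ 0 := by rw [hM1]; exact mul_ne_zero X_ne_zero hX1ne
  -- geometric sum identity in characteristic two
  have hgeom : ∀ m : ℕ, (∑ i ∈ Finset.range m, M ^ i) * (M + 1) = M ^ m + 1 := by
    intro m
    have h := geom_sum_mul M m
    rwa [CharTwo.sub_eq_add, CharTwo.sub_eq_add] at h
  have hRs := hgeom s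
  -- 1 + M * R = (M+1)^s
  have e2 : (M + 1) ^ (s + 1) = M ^ (s + 1) + 1 := by
    rw [← hs, add_pow_char_pow, one_pow]
  have h4 : 1 + M * (∑ i ∈ Finset.range s, M ^ i) = (M + 1) ^ s := by
    apply mul_right_cancel₀ hM1ne
    rw [← pow_succ, e2]
    linear_combination M * hRs + M * h2
  have hRne : (∑ i ∈ Finset.range s, M ^ i) ≠ 0 := by
    intro h
    rw [h, mul_zero, add_zero] at h4
    have := congrArg (Polynomial.eval 0) h4
    rw [Polynomial.eval_one, Polynomial.eval_pow, hM1e0,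
      zero_pow (by omega : s ≠ 0)] at this
    exact one_ne_zero this
  -- S = 1 + M (M+1) R^2
  have hS : (∑ i ∈ Finset.range (2 * s + 1), M ^ i)
      = 1 + M * (M + 1) * (∑ i ∈ Finset.range s, M ^ i) ^ 2 := by
    apply mul_right_cancel₀ hM1ne
    rw [hgeom (2 * s + 1)]
    linear_combination (-(M * ((∑ i ∈ Finset.range s, M ^ i) * (M + 1) + M ^ s + 1))) * hRs
      - (M + M ^ (s + 1)) * h2
  -- A = G 0
  have hA0 : A = Gaux n s 0 := by
    rw [hA, hS]
    simp only [Gaux, Nat.add_zero, Nat.sub_zero]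
    rw [hn, add_pow_char_pow, one_pow, mul_pow, mul_pow, ← pow_mul]
  -- evaluations of G k
  have hGodd : ∀ k, k < n → (Gaux n s k).eval 0 = 1 ∧ (Gaux n s k).eval 1 = 1 := by
    intro k hk
    have hnk : n - k ≠ 0 := by omega
    constructor <;>
      simp [Gaux, hMe0, hMe1, hM1e0, hM1e1, zero_pow hnk]
  -- the trajectory
  have htraj : ∀ k, k < n → collatz A (2 * k + 1) = Gaux n s k := by
    intro k
    induction k with
    | zero =>
      intro h0k
      obtain ⟨hg0, hg1⟩ := hGodd 0 h0k
      rw [collatz_odd_idx, show collatz A (2 * 0) = A from rfl, hA0]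
      simpa using oddPart_eq_of_odd 0 0 (Gaux n s 0) hg0 hg1
    | succ k ih =>
      intro hk1
      have hk : k < n := by omega
      obtain ⟨hg0, hg1⟩ := hGodd (k + 1) hk1
      have e : (1 : Polynomial (ZMod 2)) + M * Gaux n s k
          = X * (X + 1) * Gaux n s (k + 1) := by
        rw [← hM1]
        simp only [Gaux]
        rw [show n - k = (n - (k + 1)) + 1 from by omega]
        ring
      rw [collatz_odd_idx, show 2 * (k + 1) = 2 * k + 2 from by ring,
        collatz_even_idx, ih hk, e]
      simpa using oddPart_eq_of_odd 1 1 (Gaux n s (k + 1)) hg0 hg1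
  -- the final step
  have hfin : collatz A (2 * n + 1) = 1 := by
    have hlast := htraj (n - 1) (by omega)
    have e1 : (1 : Polynomial (ZMod 2)) + M * Gaux n s (n - 1)
        = (M + 1) * (1 + (M * (∑ i ∈ Finset.range s, M ^ i)) ^ (2 * n)) := by
      simp only [Gaux]
      rw [show n - (n - 1) = 1 from by omega, mul_pow M,
        show (2 : ℕ) * n = (n + (n - 1)) + 1 from by omega, pow_succ M]
      ring
    have e2 : (1 : Polynomial (ZMod 2)) + (M * (∑ i ∈ Finset.range s, M ^ i)) ^ (2 * n)
        = (M + 1) ^ (2 * s * n) := by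
      have h2n : 2 * n = 2 ^ (u + 1) := by rw [hn, pow_succ, Nat.mul_comm]
      have hp := add_pow_char_pow (R := Polynomial (ZMod 2)) (p := 2) (n := u + 1)
        (x := (1 : Polynomial (ZMod 2))) (y := M * (∑ i ∈ Finset.range s, M ^ i))
      rw [one_pow] at hp
      rw [h2n, ← hp, h4, ← pow_mul]
      congr 1
      rw [← h2n]; ring
    have hone : (1 : Polynomial (ZMod 2)) + M * Gaux n s (n - 1)
        = X ^ (2 * s * n + 1) * (X + 1) ^ (2 * s * n + 1) * 1 := by
      rw [e1, e2, hM1, ← pow_succ', mul_pow, mul_one]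
    rw [collatz_odd_idx, show 2 * n = 2 * (n - 1) + 2 from by omega,
      collatz_even_idx, hlast, hone]
    exact oddPart_eq_of_odd (2 * s * n + 1) (2 * s * n + 1) 1 (by simp) (by simp)
  -- minimality
  have hne1 : ∀ m, m < n → collatz A (2 * m + 1) ≠ 1 := by
    intro m hm hcontra
    rw [htraj m hm] at hcontra
    have hT : M ^ (n + m) * (M + 1) ^ (n - m)
        * (∑ i ∈ Finset.range s, M ^ i) ^ (2 * n) = 0 := by
      simpa [Gaux, add_eq_left] using hcontra
    exact (mul_ne_zero (mul_ne_zero (pow_ne_zero _ hMne) (pow_ne_zero _ hM1ne))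
      (pow_ne_zero _ hRne)) hT
  -- conclusion
  have hsinf : sInf {m : ℕ | collatz A (2 * m + 1) = 1} = n := by
    apply le_antisymm
    · exact Nat.sInf_le hfin
    · refine le_csInf ⟨n, hfin⟩ ?_
      intro m hm
      by_contra hlt
      push_neg at hlt
      exact hne1 m hlt hm
  simp only [collatzLength, hsinf]
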